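/- Let P be an admissible Poisson algebra, and let φ : P × P → P be a bilinear map with symmetric part φ_s and skew-symmetric part φ_a. Then the Poisson coboundary decomposes as δ²_P φ = 2δ_C φ_a + 4δ_H φ_s + 2δ̃_C φ_s + 2δ̃_H φ_a + 2L₁(φ_a) + 2L₂(φ_s), where δ_C φ_a(X,Y,Z) = {φ_a(X,Y),Z} + {φ_a(Y,Z),X} + {φ_a(Z,X),Y} + φ_a({X,Y},Z) + φ_a({Y,Z},X) + φ_a({Z,X},Y), δ_H φ_s(X,Y,Z) = φ_s(X,Y)∙Z - X∙φ_s(Y,Z) + φ_s(X∙Y,Z) - φ_s(X,Y∙Z), L₁(φ)(X,Y,Z) = φ(X∙Y,Z) - φ(X,Z)∙Y - X∙φ(Y,Z), L₂(φ)(X,Y,Z) = -3φ(X,{Y,Z}) + {φ(X,Y),Z} - {φ(X,Z),Y}, and δ̃_C, δ̃_H are the same formulas as δ_C, δ_H applied to φ_s, φ_a respectively. -/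
import Mathlib


variable {K : Type*} [Field K] {P : Type*} [AddCommGroup P] [Module K P]

/-- The associator of a bilinear multiplication. -/
def assocOf (m : P →ₗ[K] P →ₗ[K] P) (X Y Z : P) : P := m (m X Y) Z - m X (m Y Z)

/-- Admissible Poisson algebra condition:
`3 A(X,Y,Z) = (X·Z)·Y + (Y·Z)·X - (Y·X)·Z - (Z·X)·Y`. -/
def IsAdmissible (m : P →ₗ[K] P →ₗ[K] P) : Prop :=
  ∀ X Y Z : P, (3 : ℤ) • assocOf m X Y Z =
    m (m X Z) Y + m (m Y Z) X - m (m Y X) Z - m (m Z X) Y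

/-- The antisymmetrized bracket `{X,Y} = (X·Y - Y·X)/2`. -/
def brOf (m : P →ₗ[K] P →ₗ[K] P) (X Y : P) : P := (2 : K)⁻¹ • (m X Y - m Y X)

/-- The symmetrized product `X∙Y = (X·Y + Y·X)/2`. -/
def bulOf (m : P →ₗ[K] P →ₗ[K] P) (X Y : P) : P := (2 : K)⁻¹ • (m X Y + m Y X)

/-- The Poisson coboundary `δ²_P φ` of a 2-cochain `φ`. -/
def deltaP (m φ : P →ₗ[K] P →ₗ[K] P) (X Y Z : P) : P :=
  (3 : ℤ) • φ (m X Y) Z - (3 : ℤ) • φ X (m Y Z) - φ (m X Z) Y - φ (m Y Z) X +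
    φ (m Y X) Z + φ (m Z X) Y +
  (3 : ℤ) • m (φ X Y) Z - (3 : ℤ) • m X (φ Y Z) - m (φ X Z) Y - m (φ Y Z) X +
    m (φ Y X) Z + m (φ Z X) Y

/-- The symmetric part of a 2-cochain. -/
def symPart (φ : P →ₗ[K] P →ₗ[K] P) (X Y : P) : P := (2 : K)⁻¹ • (φ X Y + φ Y X)

/-- The skew-symmetric part of a 2-cochain. -/
def skewPart (φ : P →ₗ[K] P →ₗ[K] P) (X Y : P) : P := (2 : K)⁻¹ • (φ X Y - φ Y X)

/-- The Chevalley coboundary formula (with bracket `br`). -/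
def deltaC (br ψ : P → P → P) (X Y Z : P) : P :=
  br (ψ X Y) Z + br (ψ Y Z) X + br (ψ Z X) Y +
    ψ (br X Y) Z + ψ (br Y Z) X + ψ (br Z X) Y

/-- The Harrison coboundary formula (with product `bul`). -/
def deltaH (bul ψ : P → P → P) (X Y Z : P) : P :=
  bul (ψ X Y) Z - bul X (ψ Y Z) + ψ (bul X Y) Z - ψ X (bul Y Z)

/-- The operator `L₁`. -/
def opL1 (bul ψ : P → P → P) (X Y Z : P) : P :=
  ψ (bul X Y) Z - bul (ψ X Z) Y - bul X (ψ Y Z)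

/-- The operator `L₂`. -/
def opL2 (br ψ : P → P → P) (X Y Z : P) : P :=
  -((3 : ℤ) • ψ X (br Y Z)) + br (ψ X Y) Z - br (ψ X Z) Y

set_option maxHeartbeats 2000000 in
/-- decomposition of the Poisson coboundary:
`δ²_P φ = 2δ_C φ_a + 4δ_H φ_s + 2δ̃_C φ_s + 2δ̃_H φ_a + 2L₁(φ_a) + 2L₂(φ_s)`. -/
theorem stmt19 (h2 : (2 : K) ≠ 0) (h3 : (3 : K) ≠ 0)
    (m : P →ₗ[K] P →ₗ[K] P) (hm : IsAdmissible m)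
    (φ : P →ₗ[K] P →ₗ[K] P) :
    ∀ X Y Z : P, deltaP m φ X Y Z =
      (2 : ℤ) • deltaC (brOf m) (skewPart φ) X Y Z +
      (4 : ℤ) • deltaH (bulOf m) (symPart φ) X Y Z +
      (2 : ℤ) • deltaC (brOf m) (symPart φ) X Y Z +
      (2 : ℤ) • deltaH (bulOf m) (skewPart φ) X Y Z +
      (2 : ℤ) • opL1 (bulOf m) (skewPart φ) X Y Z +
      (2 : ℤ) • opL2 (brOf m) (symPart φ) X Y Z := by
  intro X Y Z
  simp only [deltaP, deltaC, deltaH, opL1, opL2, brOf, bulOf, symPart, skewPart,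
    map_add, map_sub, map_smul, LinearMap.add_apply, LinearMap.sub_apply,
    LinearMap.smul_apply, smul_add, smul_sub, smul_neg, neg_smul, smul_smul]
  have h32 : (32:K) ≠ 0 := by
    have := pow_ne_zero 5 h2; norm_num at this; exact this
  have h64 : (64:K) ≠ 0 := by
    have := pow_ne_zero 6 h2; norm_num at this; exact this
  match_scalars <;> (try (field_simp [h32, h64]; try ring)) <;> (field_simp [h32, h64]; try ring)
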